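/- Let A be a C*-hyperbialgebra with coproduct Δ and counit ε, let Ã ⊆ A be a unital C*-subalgebra with conditional expectation P: A → Ã satisfying (P ⊗ id)∘Δ∘P = (P ⊗ P)∘Δ = (id ⊗ P)∘Δ. Define Δ̃ = (P⊗P)∘Δ|_Ã and ε̃ = ε|_Ã. Then ε̃ satisfies the counit property for Δ̃: (ε̃ ⊗ id)∘Δ̃ = (id ⊗ ε̃)∘Δ̃ = id on Ã. -/
import Mathlib


open scoped TensorProduct

/-- With `P` a conditional expectation intertwining the coproduct as stated, the
restricted counit `ε̃ = ε|_Ã` satisfies the counit property for `Δ̃ = (P⊗P)∘Δ|_Ã`. -/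
theorem stmt_1 {A : Type*} [NormedRing A] [StarRing A] [CStarRing A]
    [NormedAlgebra ℂ A] [StarModule ℂ A] [CompleteSpace A]
    (Δ : A →ₗ[ℂ] A ⊗[ℂ] A) (ε : A →⋆ₐ[ℂ] ℂ)
    (hcoassoc : ∀ a : A,
      (TensorProduct.assoc ℂ A A A)
          ((TensorProduct.map Δ (LinearMap.id : A →ₗ[ℂ] A)) (Δ a))
        = (TensorProduct.map (LinearMap.id : A →ₗ[ℂ] A) Δ) (Δ a))
    (hcounit₁ : ∀ a : A,
      (TensorProduct.lid ℂ A)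
        ((TensorProduct.map ε.toLinearMap (LinearMap.id : A →ₗ[ℂ] A)) (Δ a)) = a)
    (hcounit₂ : ∀ a : A,
      (TensorProduct.rid ℂ A)
        ((TensorProduct.map (LinearMap.id : A →ₗ[ℂ] A) ε.toLinearMap) (Δ a)) = a)
    (Asub : StarSubalgebra ℂ A)
    (P : A →L[ℂ] A) (hPnorm : ‖P‖ = 1)
    (hPrange : ∀ a : A, P a ∈ Asub)
    (hPfix : ∀ a ∈ Asub, P a = a)
    (h₁ : (TensorProduct.map (P : A →ₗ[ℂ] A) (LinearMap.id : A →ₗ[ℂ] A)).comp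
        (Δ.comp (P : A →ₗ[ℂ] A))
      = (TensorProduct.map (P : A →ₗ[ℂ] A) (P : A →ₗ[ℂ] A)).comp Δ)
    (h₂ : (TensorProduct.map (P : A →ₗ[ℂ] A) (P : A →ₗ[ℂ] A)).comp Δ
      = (TensorProduct.map (LinearMap.id : A →ₗ[ℂ] A) (P : A →ₗ[ℂ] A)).comp Δ)
    (Δt : A →ₗ[ℂ] A ⊗[ℂ] A)
    (hΔt : Δt = (TensorProduct.map (P : A →ₗ[ℂ] A) (P : A →ₗ[ℂ] A)).comp Δ) :
    ∀ a ∈ Asub,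
      (TensorProduct.lid ℂ A)
          ((TensorProduct.map ε.toLinearMap (LinearMap.id : A →ₗ[ℂ] A)) (Δt a)) = a
      ∧ (TensorProduct.rid ℂ A)
          ((TensorProduct.map (LinearMap.id : A →ₗ[ℂ] A) ε.toLinearMap) (Δt a)) = a := by
  intro a ha
  have hPa : P a = a := hPfix a ha
  have e₁ : Δt a = TensorProduct.map (LinearMap.id : A →ₗ[ℂ] A) (P : A →ₗ[ℂ] A) (Δ a) := by
    rw [hΔt]; exact LinearMap.ext_iff.mp h₂ a
  have e₂ : Δt a = TensorProduct.map (P : A →ₗ[ℂ] A) (LinearMap.id : A →ₗ[ℂ] A) (Δ a) := by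
    rw [hΔt]
    have := (LinearMap.ext_iff.mp h₁ a).symm
    simpa [hPa] using this
  have L1 : ∀ x : A ⊗[ℂ] A,
      (TensorProduct.lid ℂ A) ((TensorProduct.map ε.toLinearMap (LinearMap.id : A →ₗ[ℂ] A))
        ((TensorProduct.map (LinearMap.id : A →ₗ[ℂ] A) (P : A →ₗ[ℂ] A)) x))
      = P ((TensorProduct.lid ℂ A)
          ((TensorProduct.map ε.toLinearMap (LinearMap.id : A →ₗ[ℂ] A)) x)) := by
    intro x
    induction x using TensorProduct.induction_on with
    | zero => simp
    | tmul b c => simp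
    | add y z hy hz => simp [map_add, hy, hz]
  have L2 : ∀ x : A ⊗[ℂ] A,
      (TensorProduct.rid ℂ A) ((TensorProduct.map (LinearMap.id : A →ₗ[ℂ] A) ε.toLinearMap)
        ((TensorProduct.map (P : A →ₗ[ℂ] A) (LinearMap.id : A →ₗ[ℂ] A)) x))
      = P ((TensorProduct.rid ℂ A)
          ((TensorProduct.map (LinearMap.id : A →ₗ[ℂ] A) ε.toLinearMap) x)) := by
    intro x
    induction x using TensorProduct.induction_on with
    | zero => simp
    | tmul b c => simp [TensorProduct.smul_tmul']
    | add y z hy hz => simp [map_add, hy, hz]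
  constructor
  · rw [e₁, L1, hcounit₁ a, hPa]
  · rw [e₂, L2, hcounit₂ a, hPa]
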